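/- Let I and J be finite index sets. For i ∈ I let (S_i, φ_i) be a status, and for j ∈ J let (S'_j, φ'_j) be a status together with a set T_j ⊆ V. Assume every full realization ψ satisfies φ_i ≺ ψ for exactly one i ∈ I, and φ'_j ≺ ψ for exactly one j ∈ J. Then Σ_{(i,j) ∈ I×J with φ_i and φ'_j compatible} Σ_{full ψ with φ_i⊕φ'_j ≺ ψ} Pr[ψ] · |A_∞(S_i ∪ S'_j ∪ T_j, ψ)| ≥ Σ_{j ∈ J} Σ_{full ψ with φ'_j ≺ ψ} Pr[ψ] · |A_∞(S'_j ∪ T_j, ψ)|. (This is the content of the lemma that concatenating a decision tree in front of another decision tree does not decrease the expected profit of the latter, F(T1 ⊕ T2) ≥ F(T2).) -/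
import Mathlib


open scoped Classical

variable {V : Type*}

/-- A `t`-live-path from `u` to `v`: a directed path with at most `t` edges, all of which lie
in the live-edge set `L` (every node is reached from itself by a path of 0 edges). -/
def LiveReach (L : Finset (V × V)) (t : ℕ∞) (u v : V) : Prop :=
  ∃ (n : ℕ) (f : ℕ → V), (n : ℕ∞) ≤ t ∧ f 0 = u ∧ f n = v ∧ ∀ i < n, (f i, f (i + 1)) ∈ L

/-- `A_t(S, ψ)`: the nodes reachable from `S` by a `t`-live-path in the full realization
whose live-edge set is `L`. -/
noncomputable def Active [Fintype V] (L : Finset (V × V)) (t : ℕ∞) (S : Finset V) : Finset V :=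
  Finset.univ.filter fun v => ∃ u ∈ S, LiveReach L t u v

/-- `Δ_t(S, W, ψ) = |A_t(S ∪ W, ψ)| − |A_t(S, ψ)|`, for the full realization with
live-edge set `L`. -/
noncomputable def marg [Fintype V] (L : Finset (V × V)) (t : ℕ∞) (S W : Finset V) : ℝ :=
  ((Active L t (S ∪ W)).card : ℝ) - ((Active L t S).card : ℝ)

/-- `Pr[ψ | φ]` for realizations `φ = (φL, φD) ≺ ψ = (ψL, ψD)`. -/
noncomputable def condPr (p : V × V → ℝ) (φL φD ψL ψD : Finset (V × V)) : ℝ :=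
  (∏ e ∈ ψL \ φL, p e) * ∏ e ∈ ψD \ φD, (1 - p e)

/-- The live-edge sets of the full realizations `ψ` with `φ ≺ ψ`, where `φ = (φL, φD)`.
(A full realization is determined by its live-edge set `T ⊆ E`; its dead set is `E \ T`.) -/
noncomputable def fullExts (E φL φD : Finset (V × V)) : Finset (Finset (V × V)) :=
  E.powerset.filter fun T => φL ⊆ T ∧ Disjoint φD T

/-- `Δf_t(S, W, φ) = Σ_{full ψ, φ ≺ ψ} Pr[ψ|φ] · Δ_t(S, W, ψ)`. -/
noncomputable def margf [Fintype V] (p : V × V → ℝ) (E φL φD : Finset (V × V)) (t : ℕ∞)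
    (S W : Finset V) : ℝ :=
  ∑ T ∈ fullExts E φL φD, condPr p φL φD T (E \ T) * marg T t S W

/-- `Pr[ψ]` for the full realization whose live-edge set is `T ⊆ E`. -/
noncomputable def totPr (p : V × V → ℝ) (E T : Finset (V × V)) : ℝ :=
  (∏ e ∈ T, p e) * ∏ e ∈ E \ T, (1 - p e)

/-- Concatenating a decision tree in front of another does not decrease the expected profit
(`F(T1 ⊕ T2) ≥ F(T2)`): with `{φ_i}` and `{φ'_j}` the leaf realizations of two decision trees
(each partitioning the full realizations), statuses `(S_i, φ_i)`, `(S'_j, φ'_j)` and seed sets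
`T_j`, we have
`Σ_{(i,j) compatible} Σ_{full ψ, φ_i⊕φ'_j ≺ ψ} Pr[ψ]·|A_∞(S_i ∪ S'_j ∪ T_j, ψ)|
  ≥ Σ_j Σ_{full ψ, φ'_j ≺ ψ} Pr[ψ]·|A_∞(S'_j ∪ T_j, ψ)|`. -/
theorem stmt_8 [Fintype V] [Nonempty V] (E : Finset (V × V)) (p : V × V → ℝ)
    (hp : ∀ e ∈ E, 0 < p e ∧ p e ≤ 1)
    (I J : Type*) [Fintype I] [Fintype J]
    (Si : I → Finset V) (φL φD : I → Finset (V × V))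
    (hφE : ∀ i, φL i ∪ φD i ⊆ E) (hφdisj : ∀ i, Disjoint (φL i) (φD i))
    (Sj' : J → Finset V) (φL' φD' : J → Finset (V × V))
    (hφE' : ∀ j, φL' j ∪ φD' j ⊆ E) (hφdisj' : ∀ j, Disjoint (φL' j) (φD' j))
    (Tj : J → Finset V)
    (hpartI : ∀ T ∈ E.powerset, ∃! i : I, T ∈ fullExts E (φL i) (φD i))
    (hpartJ : ∀ T ∈ E.powerset, ∃! j : J, T ∈ fullExts E (φL' j) (φD' j)) :
    ∑ ij ∈ (Finset.univ : Finset (I × J)).filter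
        (fun ij => Disjoint (φL ij.1) (φD' ij.2) ∧ Disjoint (φD ij.1) (φL' ij.2)),
      ∑ T ∈ fullExts E (φL ij.1 ∪ φL' ij.2) (φD ij.1 ∪ φD' ij.2),
        totPr p E T * ((Active T ⊤ (Si ij.1 ∪ Sj' ij.2 ∪ Tj ij.2)).card : ℝ)
    ≥ ∑ j : J, ∑ T ∈ fullExts E (φL' j) (φD' j),
        totPr p E T * ((Active T ⊤ (Sj' j ∪ Tj j)).card : ℝ) := by
  classical
  have hmem : ∀ (A B T : Finset (V × V)),
      T ∈ fullExts E A B ↔ (T ⊆ E ∧ A ⊆ T ∧ Disjoint B T) := by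
    intro A B T
    simp [fullExts, Finset.mem_filter, Finset.mem_powerset]
  have hPr : ∀ T ∈ E.powerset, 0 ≤ totPr p E T := by
    intro T hT
    rw [Finset.mem_powerset] at hT
    refine mul_nonneg (Finset.prod_nonneg fun e he => (hp e (hT he)).1.le)
      (Finset.prod_nonneg fun e he => ?_)
    have := (hp e (Finset.mem_sdiff.mp he).1).2
    linarith
  have key : ∀ (A B : Finset (V × V)) (f : Finset (V × V) → ℝ),
      ∑ T ∈ fullExts E A B, f T
        = ∑ T ∈ E.powerset, if T ∈ fullExts E A B then f T else 0 := by
    intro A B f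
    rw [← Finset.sum_filter, Finset.filter_mem_eq_inter,
      Finset.inter_eq_right.mpr (show fullExts E A B ⊆ E.powerset from Finset.filter_subset _ _)]
  have hL : ∑ ij ∈ (Finset.univ : Finset (I × J)).filter
        (fun ij => Disjoint (φL ij.1) (φD' ij.2) ∧ Disjoint (φD ij.1) (φL' ij.2)),
      ∑ T ∈ fullExts E (φL ij.1 ∪ φL' ij.2) (φD ij.1 ∪ φD' ij.2),
        totPr p E T * ((Active T ⊤ (Si ij.1 ∪ Sj' ij.2 ∪ Tj ij.2)).card : ℝ)
      = ∑ T ∈ E.powerset, ∑ ij : I × J,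
          if (Disjoint (φL ij.1) (φD' ij.2) ∧ Disjoint (φD ij.1) (φL' ij.2))
              ∧ T ∈ fullExts E (φL ij.1 ∪ φL' ij.2) (φD ij.1 ∪ φD' ij.2)
          then totPr p E T * ((Active T ⊤ (Si ij.1 ∪ Sj' ij.2 ∪ Tj ij.2)).card : ℝ) else 0 := by
    rw [Finset.sum_comm, Finset.sum_filter]
    refine Finset.sum_congr rfl fun ij _ => ?_
    by_cases hC : Disjoint (φL ij.1) (φD' ij.2) ∧ Disjoint (φD ij.1) (φL' ij.2)
    · rw [if_pos hC, key]
      exact Finset.sum_congr rfl fun T _ => by simp [hC]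
    · rw [if_neg hC]
      simp [hC]
  have hR : ∑ j : J, ∑ T ∈ fullExts E (φL' j) (φD' j),
        totPr p E T * ((Active T ⊤ (Sj' j ∪ Tj j)).card : ℝ)
      = ∑ T ∈ E.powerset, ∑ j : J,
          if T ∈ fullExts E (φL' j) (φD' j)
          then totPr p E T * ((Active T ⊤ (Sj' j ∪ Tj j)).card : ℝ) else 0 := by
    rw [Finset.sum_comm]
    exact Finset.sum_congr rfl fun j _ => key _ _ _
  rw [ge_iff_le, hL, hR]
  refine Finset.sum_le_sum fun T hT => ?_
  obtain ⟨i0, hi0, hiu⟩ := hpartI T hT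
  obtain ⟨j0, hj0, hju⟩ := hpartJ T hT
  rw [hmem] at hi0 hj0
  obtain ⟨hTE, hiL, hiD⟩ := hi0
  obtain ⟨-, hjL, hjD⟩ := hj0
  -- evaluate the right (pair-indexed) sum at the unique pair (i0, j0)
  have hCpair : Disjoint (φL i0) (φD' j0) ∧ Disjoint (φD i0) (φL' j0) :=
    ⟨(hjD.symm.mono_left hiL), (hiD.mono_right hjL)⟩
  have hMpair : T ∈ fullExts E (φL i0 ∪ φL' j0) (φD i0 ∪ φD' j0) := by
    rw [hmem]
    exact ⟨hTE, Finset.union_subset hiL hjL, Finset.disjoint_union_left.mpr ⟨hiD, hjD⟩⟩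
  have hRsum : (∑ ij : I × J,
      if (Disjoint (φL ij.1) (φD' ij.2) ∧ Disjoint (φD ij.1) (φL' ij.2))
          ∧ T ∈ fullExts E (φL ij.1 ∪ φL' ij.2) (φD ij.1 ∪ φD' ij.2)
      then totPr p E T * ((Active T ⊤ (Si ij.1 ∪ Sj' ij.2 ∪ Tj ij.2)).card : ℝ) else 0)
      = totPr p E T * ((Active T ⊤ (Si i0 ∪ Sj' j0 ∪ Tj j0)).card : ℝ) := by
    rw [Finset.sum_eq_single_of_mem (i0, j0) (Finset.mem_univ _)]
    · rw [if_pos ⟨hCpair, hMpair⟩]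
    · intro ij _ hne
      rw [if_neg]
      rintro ⟨-, hM⟩
      rw [hmem] at hM
      obtain ⟨-, hML, hMD⟩ := hM
      have h1 : ij.1 = i0 := hiu ij.1 ((hmem _ _ _).mpr
        ⟨hTE, (Finset.union_subset_iff.mp hML).1, (Finset.disjoint_union_left.mp hMD).1⟩)
      have h2 : ij.2 = j0 := hju ij.2 ((hmem _ _ _).mpr
        ⟨hTE, (Finset.union_subset_iff.mp hML).2, (Finset.disjoint_union_left.mp hMD).2⟩)
      exact hne (Prod.ext h1 h2)
  have hLsum : (∑ j : J,
      if T ∈ fullExts E (φL' j) (φD' j)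
      then totPr p E T * ((Active T ⊤ (Sj' j ∪ Tj j)).card : ℝ) else 0)
      = totPr p E T * ((Active T ⊤ (Sj' j0 ∪ Tj j0)).card : ℝ) := by
    rw [Finset.sum_eq_single_of_mem j0 (Finset.mem_univ _)]
    · rw [if_pos ((hmem _ _ _).mpr ⟨hTE, hjL, hjD⟩)]
    · intro j _ hne
      rw [if_neg]
      intro hM
      exact hne (hju j hM)
  rw [hRsum, hLsum]
  refine mul_le_mul_of_nonneg_left ?_ (hPr T hT)
  have hsub : Active T ⊤ (Sj' j0 ∪ Tj j0) ⊆ Active T ⊤ (Si i0 ∪ Sj' j0 ∪ Tj j0) := by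
    intro v hv
    simp only [Active, Finset.mem_filter] at hv ⊢
    obtain ⟨-, u, hu, hr⟩ := hv
    refine ⟨Finset.mem_univ v, u, ?_, hr⟩
    exact Finset.union_subset_union Finset.subset_union_right (Finset.Subset.refl _) hu
  exact_mod_cast Finset.card_le_card hsub
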